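/- Let p be a prime, q = p^e with e ≥ 2, let a be an integer with 1 ≤ a < e, let n ≥ 2, and let L be a field extension of F_q of finite degree k ≥ 2. Consider the action of SL_n(F_q) on M_n(L) given by g : A ↦ ḡ^{-1} · A · ḡ', where ḡ is the image of g in M_n(L) under the inclusion F_q ⊆ L and ḡ' is the image in M_n(L) of the matrix g^{(p^a)} obtained from g by applying x ↦ x^{p^a} entrywise. Then this action has a regular orbit modulo its kernel: there exists A ∈ M_n(L) such that every g ∈ SL_n(F_q) with ḡ^{-1} · A · ḡ' = A acts as the identity on all of M_n(L). -/

import Mathlib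

open Matrix Polynomial

/-- If `ω` is not in the image of `F` in `L`, then `ω * x̄ = ȳ` with `x, y ∈ F` forces
`x = 0` and `y = 0`. -/
lemma aux_omega {F L : Type*} [Field F] [Field L] [Algebra F L]
    {ω : L} (hω : ω ∉ Set.range (algebraMap F L)) {x y : F}
    (h : ω * algebraMap F L x = algebraMap F L y) : x = 0 ∧ y = 0 := by
  by_cases hx : x = 0
  · subst hx
    rw [map_zero, mul_zero] at h
    refine ⟨rfl, (algebraMap F L).injective ?_⟩
    rw [map_zero, ← h]
  · exfalso
    apply hω
    have hx' : algebraMap F L x ≠ 0 := fun h0 => hx ((algebraMap F L).injective (by rw [h0, map_zero]))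
    refine ⟨y / x, ?_⟩
    rw [map_div₀, div_eq_iff hx', ← h, mul_comm]

/-- If `α` is not fixed by `z ↦ z ^ q` but `x, y` are, then `α * x = y` forces `x = y = 0`. -/
lemma aux_frob {F : Type*} [Field F] {q : ℕ} {α x y : F} (hα : α ^ q ≠ α)
    (hx : x ^ q = x) (hy : y ^ q = y) (h : α * x = y) : x = 0 ∧ y = 0 := by
  by_cases hx0 : x = 0
  · subst hx0
    rw [mul_zero] at h
    exact ⟨rfl, h.symm⟩
  · exfalso
    apply hα
    have h1 : (α * x) ^ q = y ^ q := by rw [h]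
    rw [mul_pow, hx, hy, ← h] at h1
    exact mul_right_cancel₀ hx0 h1

/-- A matrix commuting with the nilpotent Jordan block (shift relation plus boundary
conditions coming from commuting with `E₁₁`) is scalar. -/
lemma aux_scalar {F : Type*} [Field F] {n : ℕ} (hn : 2 ≤ n) (g : Matrix (Fin n) (Fin n) F)
    (hshift : ∀ (i j : ℕ) (hi : i + 1 < n) (hj : j + 1 < n),
      g ⟨i + 1, hi⟩ ⟨j + 1, hj⟩ = g ⟨i, by omega⟩ ⟨j, by omega⟩)
    (hrow : ∀ j : Fin n, j ≠ ⟨0, by omega⟩ → g ⟨0, by omega⟩ j = 0)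
    (hcol : ∀ i : Fin n, i ≠ ⟨0, by omega⟩ → g i ⟨0, by omega⟩ = 0) :
    ∀ i j : Fin n, g i j = if (i : ℕ) = (j : ℕ) then g ⟨0, by omega⟩ ⟨0, by omega⟩ else 0 := by
  suffices H : ∀ m (i j : Fin n), (i : ℕ) ≤ m →
      g i j = if (i : ℕ) = (j : ℕ) then g ⟨0, by omega⟩ ⟨0, by omega⟩ else 0 by
    intro i j; exact H i i j le_rfl
  intro m
  induction m with
  | zero =>
    intro i j hi
    have hi0 : i = ⟨0, by omega⟩ := by
      apply Fin.ext; simpa using hi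
    rw [hi0]
    by_cases hj : j = ⟨0, by omega⟩
    · rw [hj]; simp
    · rw [hrow j hj, if_neg]
      intro hc
      rw [hi0] at hc
      exact hj (Fin.ext (by simpa using hc.symm))
  | succ m ih =>
    intro i j hi
    by_cases him : (i : ℕ) ≤ m
    · exact ih i j him
    · have hieq : (i : ℕ) = m + 1 := by omega
      have hiz : i ≠ ⟨0, by omega⟩ := by
        intro hc; rw [hc] at hieq; simp at hieq
      by_cases hj : j = ⟨0, by omega⟩
      · subst hj
        rw [hcol i hiz, if_neg]
        simp [hieq]
      · -- j is also a successor
        have hjpos : 0 < (j : ℕ) := by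
          rcases Nat.eq_zero_or_pos (j : ℕ) with h | h
          · exact absurd (Fin.ext (by simpa using h)) hj
          · exact h
        have hi1 : m + 1 < n := hieq ▸ i.isLt
        have hj1 : ((j : ℕ) - 1) + 1 < n := by
          have := j.isLt; omega
        have hieq' : i = ⟨m + 1, hi1⟩ := Fin.ext hieq
        have hjeq' : j = ⟨((j : ℕ) - 1) + 1, hj1⟩ := Fin.ext (by simp; omega)
        rw [hieq', hjeq', hshift m ((j : ℕ) - 1) hi1 hj1,
          ih ⟨m, by omega⟩ ⟨(j : ℕ) - 1, by omega⟩ (by simp)]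
        simp only [Fin.mk.injEq]
        have : ((i : ℕ) = (j : ℕ)) ↔ (m = (j : ℕ) - 1) := by omega
        by_cases hmj : m = (j : ℕ) - 1
        · rw [if_pos hmj, if_pos (by omega)]
        · rw [if_neg hmj, if_neg (by omega)]

theorem stmt14 {F L : Type*} [Field F] [Fintype F] [Field L] [Algebra F L]
    (p e a n k : ℕ) (hp : p.Prime) (he : 2 ≤ e) (hcard : Fintype.card F = p ^ e)
    (ha1 : 1 ≤ a) (hae : a < e) (hn : 2 ≤ n)
    (hk : Module.finrank F L = k) (h2k : 2 ≤ k) :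
    ∃ A : Matrix (Fin n) (Fin n) L,
      ∀ g : Matrix.SpecialLinearGroup (Fin n) F,
        (((g⁻¹ : Matrix.SpecialLinearGroup (Fin n) F) : Matrix (Fin n) (Fin n) F).map
            (algebraMap F L)) * A *
          (((g : Matrix (Fin n) (Fin n) F).map (fun x => x ^ p ^ a)).map (algebraMap F L)) =
            A →
        ∀ C : Matrix (Fin n) (Fin n) L,
          (((g⁻¹ : Matrix.SpecialLinearGroup (Fin n) F) : Matrix (Fin n) (Fin n) F).map
              (algebraMap F L)) * C *
            (((g : Matrix (Fin n) (Fin n) F).map (fun x => x ^ p ^ a)).map (algebraMap F L)) =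
              C := by
  haveI : NeZero n := ⟨by omega⟩
  classical
  -- characteristic of F is p
  haveI hchar : CharP F p := by
    obtain ⟨m, hr, hcard'⟩ := FiniteField.card F (ringChar F)
    have hpr : p = ringChar F := by
      have hdvd : p ∣ ringChar F ^ (m : ℕ) := by
        rw [← hcard', hcard]; exact dvd_pow_self p (by omega)
      exact (Nat.prime_dvd_prime_iff_eq hp hr).mp (hp.dvd_of_dvd_pow hdvd)
    rw [hpr]; exact ringChar.charP F
  haveI : Fact p.Prime := ⟨hp⟩
  -- an element of L outside F
  obtain ⟨ω, hω⟩ : ∃ ω : L, ω ∉ Set.range (algebraMap F L) := by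
    by_contra h
    push_neg at h
    have hbt : (⊥ : Subalgebra F L) = ⊤ := by
      ext x
      simp only [Algebra.mem_bot, Algebra.mem_top, iff_true]
      exact h x
    have h1 := Subalgebra.bot_eq_top_iff_finrank_eq_one.mp hbt
    omega
  -- an element of F not fixed by x ↦ x ^ p ^ a
  obtain ⟨α, hα⟩ : ∃ α : F, α ^ p ^ a ≠ α := by
    by_contra h
    push_neg at h
    set f : Polynomial F := Polynomial.X ^ p ^ a - Polynomial.X with hf
    have hpa : 1 < p ^ a := Nat.one_lt_pow (by omega) hp.one_lt
    have hfne : f ≠ 0 := by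
      intro h0
      have h1 : f.coeff (p ^ a) = 0 := by rw [h0]; simp
      rw [hf, Polynomial.coeff_sub, Polynomial.coeff_X_pow, if_pos rfl,
        Polynomial.coeff_X, if_neg (by omega)] at h1
      simp at h1
    have hsub : (Finset.univ : Finset F) ⊆ f.roots.toFinset := by
      intro x _
      rw [Multiset.mem_toFinset, Polynomial.mem_roots hfne]
      simp [f, Polynomial.IsRoot, h x]
    have h1 := Finset.card_le_card hsub
    have h2 := Multiset.toFinset_card_le f.roots
    have h3 := Polynomial.card_roots' f
    have h4 : f.natDegree ≤ p ^ a := by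
      refine le_trans (Polynomial.natDegree_sub_le _ _) ?_
      simp [Polynomial.natDegree_X_pow, Polynomial.natDegree_X]; omega
    have h5 : Fintype.card F ≤ p ^ a := by
      rw [← Finset.card_univ]; omega
    have h6 : p ^ a < p ^ e := Nat.pow_lt_pow_right hp.one_lt hae
    omega
  -- the matrices
  set ι := algebraMap F L with hι
  set z : Fin n := ⟨0, by omega⟩ with hz
  set N : Matrix (Fin n) (Fin n) F :=
    Matrix.of (fun i j => if (i : ℕ) + 1 = (j : ℕ) then 1 else 0) with hN
  set E : Matrix (Fin n) (Fin n) F :=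
    Matrix.of (fun i j => if i = z ∧ j = z then 1 else 0) with hE
  set A₀ : Matrix (Fin n) (Fin n) F := α • N + E with hA₀
  refine ⟨ω • (1 : Matrix (Fin n) (Fin n) L) + A₀.map ι, ?_⟩
  intro g hg C
  set gm : Matrix (Fin n) (Fin n) F := (g : Matrix (Fin n) (Fin n) F) with hgm
  set gσ : Matrix (Fin n) (Fin n) F := gm.map (fun x => x ^ p ^ a) with hgσ
  set gi : Matrix (Fin n) (Fin n) F :=
    ((g⁻¹ : Matrix.SpecialLinearGroup (Fin n) F) : Matrix (Fin n) (Fin n) F) with hgi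
  -- inverse relations
  have hinv1 : gi * gm = 1 := by
    rw [hgi, hgm, ← Matrix.SpecialLinearGroup.coe_mul, inv_mul_cancel,
      Matrix.SpecialLinearGroup.coe_one]
  have hinv2 : gm * gi = 1 := mul_eq_one_comm.mp hinv1
  have hinvL1 : gi.map ι * gm.map ι = 1 := by
    rw [← Matrix.map_mul, hinv1, Matrix.map_one ι (map_zero ι) (map_one ι)]
  have hinvL2 : gm.map ι * gi.map ι = 1 := by
    rw [← Matrix.map_mul, hinv2, Matrix.map_one ι (map_zero ι) (map_one ι)]
  -- from the fixed point equation: A * gσ = g * A over L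
  have h2 : (ω • (1 : Matrix (Fin n) (Fin n) L) + A₀.map ι) * gσ.map ι
      = gm.map ι * (ω • (1 : Matrix (Fin n) (Fin n) L) + A₀.map ι) := by
    have := congrArg (fun X => gm.map ι * X) hg
    rw [← mul_assoc, ← mul_assoc, hinvL2, one_mul] at this
    exact this
  -- split off the ω-part
  have h3 : ω • ((gσ - gm).map ι) = (gm * A₀ - A₀ * gσ).map ι := by
    have lhs : (ω • (1 : Matrix (Fin n) (Fin n) L) + A₀.map ι) * gσ.map ι
        = ω • gσ.map ι + (A₀ * gσ).map ι := by
      rw [add_mul, Matrix.smul_mul, one_mul, Matrix.map_mul]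
    have rhs : gm.map ι * (ω • (1 : Matrix (Fin n) (Fin n) L) + A₀.map ι)
        = ω • gm.map ι + (gm * A₀).map ι := by
      rw [mul_add, Matrix.mul_smul, mul_one, Matrix.map_mul]
    rw [lhs, rhs] at h2
    have h4 : ω • gσ.map ι - ω • gm.map ι = (gm * A₀).map ι - (A₀ * gσ).map ι := by
      rw [sub_eq_sub_iff_add_eq_add, add_comm ((gm * A₀).map ι)]
      exact h2
    rw [← smul_sub, ← Matrix.map_sub ⇑ι (map_sub ι), ← Matrix.map_sub ⇑ι (map_sub ι)] at h4
    exact h4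
  -- entrywise conclusion: gσ = gm and gm * A₀ = A₀ * gσ
  have hσ : gσ = gm := by
    ext i j
    have := congrFun (congrFun h3 i) j
    simp only [Matrix.smul_apply, Matrix.map_apply, smul_eq_mul] at this
    have h5 := (aux_omega hω this).1
    rw [Matrix.sub_apply] at h5
    exact sub_eq_zero.mp h5
  have hcomm : gm * A₀ = A₀ * gm := by
    ext i j
    have := congrFun (congrFun h3 i) j
    simp only [Matrix.smul_apply, Matrix.map_apply, smul_eq_mul] at this
    have h5 := (aux_omega hω this).2
    rw [Matrix.sub_apply, sub_eq_zero, hσ] at h5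
    exact h5
  -- entries of gm are fixed by x ↦ x ^ p ^ a
  have hfix : ∀ i j, (gm i j) ^ p ^ a = gm i j := by
    intro i j
    have := congrFun (congrFun hσ i) j
    simpa [hgσ, Matrix.map_apply] using this
  -- the iterated Frobenius ring hom
  set φ : F →+* F := iterateFrobenius F p a with hφ
  have hφdef : ∀ x : F, φ x = x ^ p ^ a := fun x => iterateFrobenius_def p a x
  have hmapN : N.map φ = N := by
    ext i j
    rw [Matrix.map_apply, hN]
    by_cases h : (i : ℕ) + 1 = (j : ℕ) <;> simp [h]
  have hmapE : E.map φ = E := by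
    ext i j
    rw [Matrix.map_apply, hE]
    by_cases h : i = z ∧ j = z <;> simp [h]
  have hmapg : gm.map φ = gm := by
    ext i j
    rw [Matrix.map_apply, hφdef]
    exact hfix i j
  -- split off the α-part in the commutation relation
  have h6 : α • (gm * N - N * gm) = E * gm - gm * E := by
    have : gm * (α • N + E) = (α • N + E) * gm := hA₀ ▸ hcomm
    rw [mul_add, add_mul, Matrix.mul_smul, Matrix.smul_mul] at this
    rw [smul_sub]
    rw [sub_eq_sub_iff_add_eq_add]
    calc α • (gm * N) + (gm * E) = α • (N * gm) + E * gm := this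
    _ = E * gm + α • (N * gm) := by rw [add_comm]
  have hXfix : ∀ (M : Matrix (Fin n) (Fin n) F), M.map φ = M →
      ∀ (M' : Matrix (Fin n) (Fin n) F), M'.map φ = M' →
      ((M * M' - M' * M).map φ = M * M' - M' * M) := by
    intro M hM M' hM'
    have h1 : (M * M').map φ = M.map φ * M'.map φ := Matrix.map_mul
    have h2 : (M' * M).map φ = M'.map φ * M.map φ := Matrix.map_mul
    rw [Matrix.map_sub ⇑φ (map_sub φ), h1, h2, hM, hM']
  have hcommN : gm * N = N * gm := by
    have hX := hXfix gm hmapg N hmapN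
    have hY := hXfix E hmapE gm hmapg
    have : gm * N - N * gm = 0 := by
      ext i j
      have h7 := congrFun (congrFun h6 i) j
      rw [Matrix.smul_apply, smul_eq_mul] at h7
      have hx : ((gm * N - N * gm) i j) ^ p ^ a = (gm * N - N * gm) i j := by
        have := congrFun (congrFun hX i) j
        rwa [Matrix.map_apply, hφdef] at this
      have hy : ((E * gm - gm * E) i j) ^ p ^ a = (E * gm - gm * E) i j := by
        have := congrFun (congrFun hY i) j
        rwa [Matrix.map_apply, hφdef] at this
      have := (aux_frob hα hx hy h7).1
      simpa using this
    have := sub_eq_zero.mp this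
    exact this
  have hcommE : gm * E = E * gm := by
    have hY := hXfix E hmapE gm hmapg
    have : E * gm - gm * E = 0 := by
      ext i j
      have h7 := congrFun (congrFun h6 i) j
      rw [Matrix.smul_apply, smul_eq_mul] at h7
      have hX := hXfix gm hmapg N hmapN
      have hx : ((gm * N - N * gm) i j) ^ p ^ a = (gm * N - N * gm) i j := by
        have := congrFun (congrFun hX i) j
        rwa [Matrix.map_apply, hφdef] at this
      have hy : ((E * gm - gm * E) i j) ^ p ^ a = (E * gm - gm * E) i j := by
        have := congrFun (congrFun hY i) j
        rwa [Matrix.map_apply, hφdef] at this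
      have := (aux_frob hα hx hy h7).2
      simpa using this
    exact (sub_eq_zero.mp this).symm
  -- compute products with N and E
  have hgN : ∀ (i : Fin n) (j : ℕ) (hj : j + 1 < n),
      (gm * N) i ⟨j + 1, hj⟩ = gm i ⟨j, by omega⟩ := by
    intro i j hj
    rw [Matrix.mul_apply]
    rw [Finset.sum_eq_single (⟨j, by omega⟩ : Fin n)]
    · simp [hN]
    · intro b _ hb
      rw [hN]
      simp only [Matrix.of_apply]
      rw [if_neg, mul_zero]
      intro hc
      apply hb
      apply Fin.ext
      simpa using hc
    · intro h; exact absurd (Finset.mem_univ _) h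
  have hgN0 : ∀ (i : Fin n), (gm * N) i z = 0 := by
    intro i
    rw [Matrix.mul_apply]
    apply Finset.sum_eq_zero
    intro b _
    rw [hN]
    simp only [Matrix.of_apply]
    rw [if_neg, mul_zero]
    simp [hz]
  have hNg : ∀ (i : ℕ) (hi : i + 1 < n) (j : Fin n),
      (N * gm) ⟨i, by omega⟩ j = gm ⟨i + 1, hi⟩ j := by
    intro i hi j
    rw [Matrix.mul_apply]
    rw [Finset.sum_eq_single (⟨i + 1, hi⟩ : Fin n)]
    · simp [hN]
    · intro b _ hb
      rw [hN]
      simp only [Matrix.of_apply]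
      rw [if_neg, zero_mul]
      intro hc
      apply hb
      apply Fin.ext
      simpa using hc.symm
    · intro h; exact absurd (Finset.mem_univ _) h
  have hgE : ∀ (i j : Fin n), (gm * E) i j = if j = z then gm i z else 0 := by
    intro i j
    rw [Matrix.mul_apply]
    by_cases hjz : j = z
    · subst hjz
      rw [Finset.sum_eq_single z]
      · simp [hE]
      · intro b _ hb
        rw [hE]
        simp only [Matrix.of_apply]
        rw [if_neg, mul_zero]
        intro hc
        exact hb hc.1
      · intro h; exact absurd (Finset.mem_univ _) h
    · rw [if_neg hjz]
      apply Finset.sum_eq_zero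
      intro b _
      rw [hE]
      simp only [Matrix.of_apply]
      rw [if_neg, mul_zero]
      intro hc
      exact hjz hc.2
  have hEg : ∀ (i j : Fin n), (E * gm) i j = if i = z then gm z j else 0 := by
    intro i j
    rw [Matrix.mul_apply]
    by_cases hiz : i = z
    · subst hiz
      rw [Finset.sum_eq_single z]
      · simp [hE]
      · intro b _ hb
        rw [hE]
        simp only [Matrix.of_apply]
        rw [if_neg, zero_mul]
        intro hc
        exact hb hc.2
      · intro h; exact absurd (Finset.mem_univ _) h
    · rw [if_neg hiz]
      apply Finset.sum_eq_zero
      intro b _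
      rw [hE]
      simp only [Matrix.of_apply]
      rw [if_neg, zero_mul]
      intro hc
      exact hiz hc.1
  -- derive the hypotheses of aux_scalar
  have hshift : ∀ (i j : ℕ) (hi : i + 1 < n) (hj : j + 1 < n),
      gm ⟨i + 1, hi⟩ ⟨j + 1, hj⟩ = gm ⟨i, by omega⟩ ⟨j, by omega⟩ := by
    intro i j hi hj
    have h1 := congrFun (congrFun hcommN ⟨i, by omega⟩) ⟨j + 1, hj⟩
    rw [hgN _ j hj, hNg i hi] at h1
    exact h1.symm
  have hrow : ∀ j : Fin n, j ≠ z → gm z j = 0 := by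
    intro j hj
    have h1 := congrFun (congrFun hcommE z) j
    rw [hgE, hEg, if_pos rfl, if_neg hj] at h1
    exact h1.symm
  have hcol : ∀ i : Fin n, i ≠ z → gm i z = 0 := by
    intro i hi
    have h1 := congrFun (congrFun hcommE i) z
    rw [hgE, hEg, if_pos rfl, if_neg hi] at h1
    exact h1
  have hgs := aux_scalar hn gm hshift hrow hcol
  set c : F := gm z z with hc
  have hgmat : gm = c • (1 : Matrix (Fin n) (Fin n) F) := by
    ext i j
    rw [hgs i j, Matrix.smul_apply, Matrix.one_apply, smul_eq_mul]
    by_cases h : i = j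
    · rw [if_pos (by rw [h]), if_pos h, mul_one]
    · rw [if_neg (fun hc' => h (Fin.ext hc')), if_neg h, mul_zero]
  -- conclude
  have hGs : gσ.map ι = (ι c) • (1 : Matrix (Fin n) (Fin n) L) := by
    rw [hσ, hgmat]
    ext i j
    rw [Matrix.map_apply, Matrix.smul_apply, Matrix.smul_apply, Matrix.one_apply,
      Matrix.one_apply, smul_eq_mul, smul_eq_mul]
    by_cases h : i = j <;> simp [h]
  have hG : gm.map ι = (ι c) • (1 : Matrix (Fin n) (Fin n) L) := by
    rw [hgmat]
    ext i j
    rw [Matrix.map_apply, Matrix.smul_apply, Matrix.smul_apply, Matrix.one_apply,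
      Matrix.one_apply, smul_eq_mul, smul_eq_mul]
    by_cases h : i = j <;> simp [h]
  calc gi.map ι * C * gσ.map ι
      = gi.map ι * C * ((ι c) • (1 : Matrix (Fin n) (Fin n) L)) := by rw [hGs]
    _ = (ι c) • (gi.map ι * C) := by rw [Matrix.mul_smul, mul_one]
    _ = gi.map ι * ((ι c) • (1 : Matrix (Fin n) (Fin n) L)) * C := by
        rw [Matrix.mul_smul, mul_one, Matrix.smul_mul]
    _ = gi.map ι * gm.map ι * C := by rw [hG]
    _ = C := by rw [hinvL1, one_mul]
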